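/- Fundamental Lemma (Willems et al.): let (A,B,C,D) be a minimal LTI system that is controllable, i.e., rank [B, AB, …, A^{n−1}B] = n, let (u^d, y^d) be a trajectory of length T of the system, and suppose the input u^d is persistently exciting of order N+n, i.e., rank H_{N+n}(u^d) = m(N+n). Then an input-output pair (u, y) of length N is a trajectory of the system if and only if there exists g ∈ ℝ^{T−N+1} such that H_N(u^d) g = u and H_N(y^d) g = y. -/

import Mathlib

open Matrix

/-- The block Hankel matrix of depth `N` of a signal `u` of length `T` with
values in `ℝ^m` (0-indexed: the `(i,k)` block is `u (i+k)` for
`i = 0,…,N-1`, `k = 0,…,T-N`). -/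
def hankelMatrix (m N T : ℕ) (u : ℕ → Fin m → ℝ) :
    Matrix (Fin N × Fin m) (Fin (T - N + 1)) ℝ :=
  fun ia k => u (ia.1.val + k.val) ia.2

/-- `(u, y)` is an input-output trajectory of length `N` of the LTI system
`(A, B, C, D)`. -/
def IsTrajectory (n m p N : ℕ) (A : Matrix (Fin n) (Fin n) ℝ)
    (B : Matrix (Fin n) (Fin m) ℝ) (C : Matrix (Fin p) (Fin n) ℝ)
    (D : Matrix (Fin p) (Fin m) ℝ)
    (u : ℕ → Fin m → ℝ) (y : ℕ → Fin p → ℝ) : Prop :=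
  ∃ x : ℕ → Fin n → ℝ,
    (∀ t, t + 1 < N → x (t + 1) = A.mulVec (x t) + B.mulVec (u t)) ∧
    (∀ t, t < N → y t = C.mulVec (x t) + D.mulVec (u t))

/-- The controllability matrix `[B, AB, …, A^{n-1}B]`. -/
def ctrbMatrix (n m : ℕ) (A : Matrix (Fin n) (Fin n) ℝ)
    (B : Matrix (Fin n) (Fin m) ℝ) : Matrix (Fin n) (Fin n × Fin m) ℝ :=
  fun i jk => (A ^ (jk.1 : ℕ) * B) i jk.2

/-- The observability matrix `[C; CA; …; CA^{K-1}]` of order `K`. -/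
def obsMatrix (n p K : ℕ) (A : Matrix (Fin n) (Fin n) ℝ)
    (C : Matrix (Fin p) (Fin n) ℝ) : Matrix (Fin K × Fin p) (Fin n) ℝ :=
  fun ip j => (C * A ^ (ip.1 : ℕ)) ip.2 j

def bigMat (n m T N : ℕ) (ud : ℕ → Fin m → ℝ) (xd : ℕ → Fin n → ℝ) :
    Matrix ((Fin N × Fin m) ⊕ Fin n) (Fin (T - N + 1)) ℝ :=
  fun r k => Sum.elim (fun ia : Fin N × Fin m => ud ((ia.1 : ℕ) + k) ia.2)
    (fun j => xd k j) r


lemma leftKernel_triv_of_rank {α β : Type} [Fintype α] [Fintype β] [DecidableEq α] [DecidableEq β]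
    (M : Matrix α β ℝ) (h : M.rank = Fintype.card α) (v : α → ℝ) (hv : v ᵥ* M = 0) : v = 0 := by
  have h1 : Mᵀ.rank = Fintype.card α := by rw [Matrix.rank_transpose]; exact h
  have h2 := LinearMap.finrank_range_add_finrank_ker (Mᵀ.mulVecLin)
  rw [Matrix.rank] at h1
  have hker : Module.finrank ℝ (LinearMap.ker Mᵀ.mulVecLin) = 0 := by
    have : Module.finrank ℝ (α → ℝ) = Fintype.card α := Module.finrank_fintype_fun_eq_card ℝ
    omega
  have hbot : LinearMap.ker Mᵀ.mulVecLin = ⊥ := Submodule.finrank_eq_zero.mp hker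
  have hm : v ∈ LinearMap.ker Mᵀ.mulVecLin := by
    simp only [LinearMap.mem_ker, Matrix.mulVecLin_apply, Matrix.mulVec_transpose]
    exact hv
  rw [hbot] at hm
  simpa using hm

lemma rank_of_leftKernel_triv {α β : Type} [Fintype α] [Fintype β] [DecidableEq α] [DecidableEq β]
    (M : Matrix α β ℝ) (h : ∀ v : α → ℝ, v ᵥ* M = 0 → v = 0) : M.rank = Fintype.card α := by
  rw [← Matrix.rank_transpose, Matrix.rank]
  have hinj : Function.Injective Mᵀ.mulVecLin := by
    rw [← LinearMap.ker_eq_bot]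
    refine LinearMap.ker_eq_bot'.mpr fun v hv => h v ?_
    simpa [Matrix.mulVecLin_apply, Matrix.mulVec_transpose] using hv
  rw [LinearMap.finrank_range_of_inj hinj]
  exact Module.finrank_fintype_fun_eq_card ℝ

lemma surjective_of_rank_rows {α β : Type} [Fintype α] [Fintype β] [DecidableEq α] [DecidableEq β]
    (M : Matrix α β ℝ) (h : M.rank = Fintype.card α) (b : α → ℝ) : ∃ g : β → ℝ, M *ᵥ g = b := by
  have hr : LinearMap.range M.mulVecLin = ⊤ := by
    apply Submodule.eq_top_of_finrank_eq
    rw [← Matrix.rank, h, Module.finrank_fintype_fun_eq_card ℝ]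
  have : b ∈ LinearMap.range M.mulVecLin := by rw [hr]; trivial
  obtain ⟨g, hg⟩ := this
  exact ⟨g, hg⟩

lemma my_vecMul_sum {ι a b : Type} [Fintype a] (s : Finset ι) (v : a → ℝ)
    (M : ι → Matrix a b ℝ) : v ᵥ* (∑ i ∈ s, M i) = ∑ i ∈ s, v ᵥ* M i := by
  ext j
  simp only [Matrix.vecMul, dotProduct, Finset.sum_apply, Matrix.sum_apply,
    Finset.mul_sum]
  exact Finset.sum_comm

lemma my_vecMul_smulM {a b : Type} [Fintype a] (v : a → ℝ) (r : ℝ) (M : Matrix a b ℝ) :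
    v ᵥ* (r • M) = r • (v ᵥ* M) := by
  ext j
  simp only [Matrix.vecMul, dotProduct, Matrix.smul_apply, Pi.smul_apply,
    smul_eq_mul, Finset.mul_sum]
  exact Finset.sum_congr rfl fun i _ => by ring

lemma my_sum_dotProduct {ι a : Type} [Fintype a] (s : Finset ι) (f : ι → a → ℝ) (w : a → ℝ) :
    (∑ i ∈ s, f i) ⬝ᵥ w = ∑ i ∈ s, f i ⬝ᵥ w := by
  simp only [dotProduct, Finset.sum_apply, Finset.sum_mul]
  exact Finset.sum_comm

lemma key_kernel (n m T N : ℕ) (hN : 0 < N)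
    (A : Matrix (Fin n) (Fin n) ℝ) (B : Matrix (Fin n) (Fin m) ℝ)
    (hctrb : (ctrbMatrix n m A B).rank = n)
    (ud : ℕ → Fin m → ℝ) (xd : ℕ → Fin n → ℝ)
    (hx : ∀ t, t + 1 < T → xd (t + 1) = A *ᵥ xd t + B *ᵥ ud t)
    (hNnT : N + n ≤ T)
    (hpe : (hankelMatrix m (N + n) T ud).rank = m * (N + n))
    (v : (Fin N × Fin m) ⊕ Fin n → ℝ)
    (hv : v ᵥ* (bigMat n m T N ud xd) = 0) : v = 0 := by
  set ξ : Fin N × Fin m → ℝ := fun ia => v (Sum.inl ia) with hξdef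
  set η : Fin n → ℝ := fun j => v (Sum.inr j) with hηdef
  -- the scalar form of the kernel condition
  set S : ℕ → ℝ := fun k => ∑ ia : Fin N × Fin m, ξ ia * ud ((ia.1 : ℕ) + k) ia.2 with hSdef
  have hv' : ∀ k : ℕ, k ≤ T - N → S k + η ⬝ᵥ xd k = 0 := by
    intro k hk
    have hk' : k < T - N + 1 := by omega
    have := congrFun hv ⟨k, hk'⟩
    simp only [Matrix.vecMul, dotProduct, Pi.zero_apply] at this
    rw [Fintype.sum_sum_type] at this
    simpa [bigMat, hSdef, dotProduct] using this
  have hTN : n ≤ T - N := by omega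
  -- φ j w = (η A^j) ⬝ w
  set φ : ℕ → (Fin n → ℝ) → ℝ := fun j w => (η ᵥ* A ^ j) ⬝ᵥ w with hφdef
  have hφlin : ∀ j (w₁ w₂ : Fin n → ℝ), φ j (w₁ - w₂) = φ j w₁ - φ j w₂ := by
    intro j w₁ w₂; simp [hφdef, dotProduct_sub]
  -- the key recurrence
  have hstep : ∀ j k, k + j ≤ T - N →
      φ j (xd k) = -(S (k + j)) - ∑ s ∈ Finset.range j, φ (j - 1 - s) (B *ᵥ ud (k + s)) := by
    intro j
    induction j with
    | zero =>
      intro k hk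
      have := hv' k (by omega)
      simp only [hφdef, pow_zero, Matrix.vecMul_one]
      simp only [Finset.range_zero, Finset.sum_empty, Nat.add_zero]
      linarith
    | succ j ih =>
      intro k hk
      have hkT : k + 1 < T := by omega
      have hxk : xd (k + 1) = A *ᵥ xd k + B *ᵥ ud k := hx k hkT
      have h1 : φ (j + 1) (xd k) = φ j (A *ᵥ xd k) := by
        simp only [hφdef, pow_succ, ← Matrix.vecMul_vecMul, Matrix.dotProduct_mulVec]
      have h2 : A *ᵥ xd k = xd (k + 1) - B *ᵥ ud k := by rw [hxk]; abel
      rw [h1, h2, hφlin, ih (k + 1) (by omega)]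
      rw [Finset.sum_range_succ' (fun s => φ (j + 1 - 1 - s) (B *ᵥ ud (k + s)))]
      have e1 : k + 1 + j = k + (j + 1) := by omega
      have e2 : ∀ s, j - 1 - s = j + 1 - 1 - (s + 1) := by intro s; omega
      rw [e1]
      have e3 : ∀ s ∈ Finset.range j, φ (j - 1 - s) (B *ᵥ ud (k + 1 + s)) =
          φ (j + 1 - 1 - (s + 1)) (B *ᵥ ud (k + (s + 1))) := by
        intro s _
        rw [← e2 s, show k + 1 + s = k + (s + 1) from by omega]
      rw [Finset.sum_congr rfl e3]
      ring_nf
      rw [show 1 + j - 1 - 0 = j from by omega]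
  -- Cayley-Hamilton
  set c : ℕ → ℝ := fun j => A.charpoly.coeff j with hcdef
  have hCH : A ^ n = -∑ j ∈ Finset.range n, c j • A ^ j := by
    have hCH0 := Matrix.aeval_self_charpoly A
    have hdeg : A.charpoly.natDegree = n := by
      rw [Matrix.charpoly_natDegree_eq_dim, Fintype.card_fin]
    have h := Polynomial.aeval_eq_sum_range (p := A.charpoly) (x := A)
    rw [hCH0, hdeg, Finset.sum_range_succ] at h
    have hc : A.charpoly.coeff n = 1 := by
      have hm := A.charpoly_monic
      rw [Polynomial.Monic, Polynomial.leadingCoeff, hdeg] at hm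
      exact hm
    rw [hc, one_smul] at h
    linear_combination (norm := module) -h
  -- the ψ vectors
  set ψ : ℕ → (Fin m → ℝ) := fun s =>
    η ᵥ* ((A ^ (n - 1 - s) + ∑ j ∈ Finset.Ico (s + 1) n, c j • A ^ (j - 1 - s)) * B) with hψdef
  have hψdot : ∀ s (w : Fin m → ℝ), ψ s ⬝ᵥ w =
      φ (n - 1 - s) (B *ᵥ w) + ∑ j ∈ Finset.Ico (s + 1) n, c j * φ (j - 1 - s) (B *ᵥ w) := by
    intro s w
    simp only [hψdef, hφdef, Matrix.dotProduct_mulVec, Matrix.vecMul_vecMul]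
    rw [Matrix.add_mul, Matrix.vecMul_add, add_dotProduct, Matrix.sum_mul,
      my_vecMul_sum, my_sum_dotProduct]
    congr 1
    refine Finset.sum_congr rfl fun j hj => ?_
    rw [Matrix.smul_mul, my_vecMul_smulM, smul_dotProduct]
    rfl
  -- the fundamental combined equation
  have hE : ∀ k : ℕ, k + n ≤ T - N →
      S (k + n) + (∑ j ∈ Finset.range n, c j * S (k + j))
        + ∑ s ∈ Finset.range n, ψ s ⬝ᵥ ud (k + s) = 0 := by
    intro k hk
    have h1 := hstep n k hk
    have h2 : φ n (xd k) = -∑ j ∈ Finset.range n, c j * φ j (xd k) := by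
      simp only [hφdef]
      rw [hCH, Matrix.vecMul_neg, neg_dotProduct, my_vecMul_sum,
        my_sum_dotProduct]
      congr 1
      refine Finset.sum_congr rfl fun j hj => ?_
      rw [my_vecMul_smulM, smul_dotProduct]
      rfl
    have h3 : ∀ j ∈ Finset.range n, c j * φ j (xd k) =
        c j * (-(S (k + j)) - ∑ s ∈ Finset.range j, φ (j - 1 - s) (B *ᵥ ud (k + s))) := by
      intro j hj
      rw [hstep j k (by simp at hj; omega)]
    rw [Finset.sum_congr rfl h3] at h2
    -- swap the double sum
    have hswap : ∑ j ∈ Finset.range n, c j * ∑ s ∈ Finset.range j, φ (j - 1 - s) (B *ᵥ ud (k + s))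
        = ∑ s ∈ Finset.range n, ∑ j ∈ Finset.Ico (s + 1) n, c j * φ (j - 1 - s) (B *ᵥ ud (k + s)) := by
      simp_rw [Finset.mul_sum]
      simp_rw [Finset.range_eq_Ico]
      rw [← Finset.sum_Ico_Ico_comm' 0 n
        (fun s j => c j * φ (j - 1 - s) (B *ᵥ ud (k + s)))]
    have h4 : ∀ s ∈ Finset.range n, ψ s ⬝ᵥ ud (k + s) =
        φ (n - 1 - s) (B *ᵥ ud (k + s)) + ∑ j ∈ Finset.Ico (s + 1) n, c j * φ (j - 1 - s) (B *ᵥ ud (k + s)) :=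
      fun s _ => hψdot s (ud (k + s))
    rw [Finset.sum_congr rfl h4, Finset.sum_add_distrib, ← hswap]
    have hexp : ∑ j ∈ Finset.range n, c j *
        (-(S (k + j)) - ∑ s ∈ Finset.range j, φ (j - 1 - s) (B *ᵥ ud (k + s)))
        = -(∑ j ∈ Finset.range n, c j * S (k + j))
          - ∑ j ∈ Finset.range n, c j * ∑ s ∈ Finset.range j, φ (j - 1 - s) (B *ᵥ ud (k + s)) := by
      rw [sub_eq_add_neg, ← Finset.sum_neg_distrib, ← Finset.sum_neg_distrib,
        ← Finset.sum_add_distrib]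
      refine Finset.sum_congr rfl fun j _ => by ring
    rw [hexp] at h2
    linarith
  -- ℕ-indexed version of ξ
  set ξ' : ℕ → Fin m → ℝ := fun i a => if h : i < N then ξ (⟨i, h⟩, a) else 0 with hξ'def
  have hS' : ∀ k : ℕ, S k = ∑ i ∈ Finset.range N, ∑ a, ξ' i a * ud (i + k) a := by
    intro k
    simp only [hSdef]
    rw [Fintype.sum_prod_type]
    rw [← Fin.sum_univ_eq_sum_range (fun i => ∑ a, ξ' i a * ud (i + k) a) N]
    refine Finset.sum_congr rfl fun i _ => Finset.sum_congr rfl fun a _ => ?_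
    simp [hξ'def, i.2]
  -- the candidate left-kernel vector for the big Hankel matrix
  set ζ : ℕ → Fin m → ℝ := fun r a =>
    (if r < n then ψ r a else ξ' (r - n) a)
      + ∑ j ∈ Finset.range n, (if j ≤ r then c j * ξ' (r - j) a else 0) with hζdef
  have hξ'zero : ∀ i, N ≤ i → ∀ a, ξ' i a = 0 := by
    intro i hi a
    simp [hξ'def, Nat.not_lt.mpr hi]
  -- the main Hankel identity
  have hZ : ∀ k : ℕ, k + n ≤ T - N →
      ∑ ra : Fin (N + n) × Fin m, ζ (ra.1 : ℕ) ra.2 * ud ((ra.1 : ℕ) + k) ra.2 = 0 := by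
    intro k hk
    rw [Fintype.sum_prod_type]
    rw [Fin.sum_univ_eq_sum_range
      (fun r => ∑ a, ζ r a * ud (r + k) a) (N + n)]
    have hsplit : ∀ r a, ζ r a * ud (r + k) a =
        (if r < n then ψ r a else ξ' (r - n) a) * ud (r + k) a
          + ∑ j ∈ Finset.range n,
              (if j ≤ r then c j * ξ' (r - j) a else 0) * ud (r + k) a := by
      intro r a
      simp only [hζdef]
      rw [add_mul, Finset.sum_mul]
    simp_rw [hsplit]
    rw [Finset.sum_congr rfl (fun r _ => Finset.sum_add_distrib (s := Finset.univ)),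
      Finset.sum_add_distrib]
    -- Part 1
    have hpart1 : ∑ r ∈ Finset.range (N + n), ∑ a,
        (if r < n then ψ r a else ξ' (r - n) a) * ud (r + k) a
        = (∑ s ∈ Finset.range n, ψ s ⬝ᵥ ud (k + s)) + S (k + n) := by
      rw [Finset.range_eq_Ico, ← Finset.sum_Ico_consecutive _ (Nat.zero_le n) (Nat.le_add_left n N)]
      congr 1
      · rw [← Finset.range_eq_Ico]
        refine Finset.sum_congr rfl fun s hs => ?_
        rw [Finset.mem_range] at hs
        simp only [if_pos hs]
        rw [show k + s = s + k from by omega]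
        rfl
      · rw [Finset.sum_Ico_eq_sum_range, show N + n - n = N from by omega, hS' (k + n)]
        refine Finset.sum_congr rfl fun i hi => ?_
        rw [Finset.mem_range] at hi
        refine Finset.sum_congr rfl fun a _ => ?_
        rw [if_neg (by omega), show n + i - n = i from by omega,
          show n + i + k = i + (k + n) from by omega]
    -- Part 2
    have hpart2 : ∑ r ∈ Finset.range (N + n), ∑ a, ∑ j ∈ Finset.range n,
        (if j ≤ r then c j * ξ' (r - j) a else 0) * ud (r + k) a
        = ∑ j ∈ Finset.range n, c j * S (k + j) := by
      rw [Finset.sum_congr rfl (fun r _ => Finset.sum_comm), Finset.sum_comm]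
      refine Finset.sum_congr rfl fun j hj => ?_
      rw [Finset.mem_range] at hj
      have hsub : Finset.Ico j (j + N) ⊆ Finset.range (N + n) := by
        intro r hr
        rw [Finset.mem_Ico] at hr
        rw [Finset.mem_range]
        omega
      rw [← Finset.sum_subset hsub]
      · rw [Finset.sum_Ico_eq_sum_range, show j + N - j = N from by omega,
          hS' (k + j), Finset.mul_sum]
        refine Finset.sum_congr rfl fun i hi => ?_
        rw [Finset.mul_sum]
        refine Finset.sum_congr rfl fun a _ => ?_
        rw [if_pos (by omega), show j + i - j = i from by omega,
          show j + i + k = i + (k + j) from by omega]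
        ring
      · intro r hr hnr
        rw [Finset.mem_Ico] at hnr
        rw [Finset.mem_range] at hr
        refine Finset.sum_eq_zero fun a _ => ?_
        by_cases hjr : j ≤ r
        · rw [if_pos hjr, hξ'zero (r - j) (by omega) a]
          ring
        · rw [if_neg hjr]
          ring
    rw [hpart1, hpart2]
    have := hE k hk
    linarith
  -- persistent excitation kills ζ
  have hζ0 : ∀ r : ℕ, r < N + n → ∀ a, ζ r a = 0 := by
    have hcard : (hankelMatrix m (N + n) T ud).rank = Fintype.card (Fin (N + n) × Fin m) := by
      rw [hpe, Fintype.card_prod, Fintype.card_fin, Fintype.card_fin, mul_comm]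
    have hker := leftKernel_triv_of_rank (hankelMatrix m (N + n) T ud) hcard
      (fun ra => ζ (ra.1 : ℕ) ra.2)
    have hvk : (fun ra : Fin (N + n) × Fin m => ζ (ra.1 : ℕ) ra.2)
        ᵥ* hankelMatrix m (N + n) T ud = 0 := by
      funext kk
      simp only [Matrix.vecMul, dotProduct, hankelMatrix, Pi.zero_apply]
      have hkk : (kk : ℕ) + n ≤ T - N := by
        have := kk.2
        omega
      exact hZ kk hkk
    have := hker hvk
    intro r hr a
    exact congrFun this (⟨r, hr⟩, a)
  -- extract ξ' = 0 by downward induction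
  have hξ'0 : ∀ d t a, N ≤ t + d → ξ' t a = 0 := by
    intro d
    induction d with
    | zero => intro t a ht; exact hξ'zero t (by omega) a
    | succ d ih =>
      intro t a ht
      by_cases htN : N ≤ t
      · exact hξ'zero t htN a
      · by_cases htd : N ≤ t + d
        · exact ih t a htd
        · have htn : n + t < N + n := by omega
          have h0 := hζ0 (n + t) htn a
          simp only [hζdef] at h0
          simp only [if_neg (show ¬ n + t < n by omega),
            show n + t - n = t from by omega] at h0
          have hsum : ∑ j ∈ Finset.range n,
              (if j ≤ n + t then c j * ξ' (n + t - j) a else 0) = 0 := by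
            refine Finset.sum_eq_zero fun j hj => ?_
            rw [Finset.mem_range] at hj
            rw [if_pos (by omega), ih (n + t - j) a (by omega)]
            ring
          rw [hsum] at h0
          simpa using h0
  have hξ'all : ∀ t a, ξ' t a = 0 := fun t a => hξ'0 N t a (by omega)
  -- extract ψ = 0
  have hψ0 : ∀ s, s < n → ψ s = 0 := by
    intro s hs
    funext a
    have h0 := hζ0 s (by omega) a
    simp only [hζdef] at h0
    simp only [if_pos hs] at h0
    have hsum : ∑ j ∈ Finset.range n,
        (if j ≤ s then c j * ξ' (s - j) a else 0) = 0 := by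
      refine Finset.sum_eq_zero fun j hj => ?_
      by_cases hjs : j ≤ s
      · rw [if_pos hjs, hξ'all]; ring
      · rw [if_neg hjs]
    rw [hsum] at h0
    simpa using h0
  -- extract η A^d B = 0 by strong induction
  have hηAB : ∀ d, d < n → η ᵥ* (A ^ d * B) = 0 := by
    intro d
    induction d using Nat.strong_induction_on with
    | _ d ih =>
      intro hd
      have hs : n - 1 - d < n := by omega
      have h0 := hψ0 (n - 1 - d) hs
      simp only [hψdef] at h0
      rw [show n - 1 - (n - 1 - d) = d from by omega] at h0
      rw [Matrix.add_mul, Matrix.vecMul_add, Matrix.sum_mul, my_vecMul_sum] at h0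
      have hterm : ∀ j ∈ Finset.Ico (n - 1 - d + 1) n,
          η ᵥ* ((c j • A ^ (j - 1 - (n - 1 - d))) * B) = 0 := by
        intro j hj
        rw [Finset.mem_Ico] at hj
        rw [Matrix.smul_mul, my_vecMul_smulM, ih (j - 1 - (n - 1 - d)) (by omega) (by omega)]
        simp
      rw [Finset.sum_congr rfl hterm, Finset.sum_const, smul_zero] at h0
      simpa using h0
  -- η = 0
  have hη0 : η = 0 := by
    have hcard : (ctrbMatrix n m A B).rank = Fintype.card (Fin n) := by
      rw [hctrb, Fintype.card_fin]
    refine leftKernel_triv_of_rank (ctrbMatrix n m A B) hcard η ?_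
    funext jk
    have := congrFun (hηAB (jk.1 : ℕ) jk.1.2) jk.2
    simp only [Matrix.vecMul, dotProduct, ctrbMatrix, Pi.zero_apply] at this ⊢
    exact this
  -- conclude
  funext r
  cases r with
  | inl ia =>
    have := hξ'all (ia.1 : ℕ) ia.2
    simp only [hξ'def, dif_pos ia.1.2] at this
    simpa using this
  | inr j => exact congrFun hη0 j

lemma my_swap {ι κ : Type} [Fintype ι] [Fintype κ] (g : ι → ℝ) (M : κ → ℝ)
    (w : ι → κ → ℝ) :
    ∑ k, g k * ∑ l, M l * w k l = ∑ l, M l * ∑ k, g k * w k l := by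
  simp_rw [Finset.mul_sum]
  rw [Finset.sum_comm]
  exact Finset.sum_congr rfl fun l _ => Finset.sum_congr rfl fun k _ => by ring

lemma comb_step {r q s : ℕ} {κ : Type} [Fintype κ]
    (P : Matrix (Fin q) (Fin r) ℝ) (Q : Matrix (Fin q) (Fin s) ℝ)
    (w : ℕ → Fin q → ℝ) (v : ℕ → Fin r → ℝ) (z : ℕ → Fin s → ℝ)
    (g : κ → ℝ) (f : κ → ℕ)
    (h : ∀ k : κ, w (f k) = P *ᵥ v (f k) + Q *ᵥ z (f k)) :
    (fun j => ∑ k, g k * w (f k) j)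
      = P *ᵥ (fun l => ∑ k, g k * v (f k) l) + Q *ᵥ (fun a => ∑ k, g k * z (f k) a) := by
  funext j
  calc ∑ k, g k * w (f k) j
      = ∑ k, g k * ((∑ l, P j l * v (f k) l) + ∑ a, Q j a * z (f k) a) := by
        refine Finset.sum_congr rfl fun k _ => ?_
        rw [congrFun (h k) j]
        simp [Matrix.mulVec, dotProduct]
    _ = (∑ k, g k * ∑ l, P j l * v (f k) l) + ∑ k, g k * ∑ a, Q j a * z (f k) a := by
        rw [← Finset.sum_add_distrib]
        exact Finset.sum_congr rfl fun k _ => mul_add _ _ _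
    _ = (∑ l, P j l * ∑ k, g k * v (f k) l) + ∑ a, Q j a * ∑ k, g k * z (f k) a := by
        congr 1
        · exact my_swap _ _ _
        · exact my_swap _ _ _
    _ = _ := by simp [Matrix.mulVec, dotProduct]

/-- Fundamental Lemma (Willems et al.): for a minimal (controllable and
observable) LTI system `(A, B, C, D)`, if `(u^d, y^d)` is a trajectory of
length `T` whose input is persistently exciting of order `N + n`, then a
length-`N` input-output pair `(u, y)` is a trajectory of the system if and
only if there exists `g ∈ ℝ^{T-N+1}` with `H_N(u^d) g = u` and
`H_N(y^d) g = y`. -/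
theorem fundamental_lemma (n m p T N : ℕ)
    (A : Matrix (Fin n) (Fin n) ℝ) (B : Matrix (Fin n) (Fin m) ℝ)
    (C : Matrix (Fin p) (Fin n) ℝ) (D : Matrix (Fin p) (Fin m) ℝ)
    (hctrb : (ctrbMatrix n m A B).rank = n)
    (hobs : (obsMatrix n p n A C).rank = n)
    (ud : ℕ → Fin m → ℝ) (yd : ℕ → Fin p → ℝ)
    (hd : IsTrajectory n m p T A B C D ud yd)
    (hNnT : N + n ≤ T)
    (hpe : (hankelMatrix m (N + n) T ud).rank = m * (N + n))
    (u : ℕ → Fin m → ℝ) (y : ℕ → Fin p → ℝ) :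
    IsTrajectory n m p N A B C D u y ↔
      ∃ g : Fin (T - N + 1) → ℝ,
        (∀ (t : ℕ) (ht : t < N) (a : Fin m),
          (hankelMatrix m N T ud).mulVec g ((⟨t, ht⟩ : Fin N), a) = u t a) ∧
        (∀ (t : ℕ) (ht : t < N) (a : Fin p),
          (hankelMatrix p N T yd).mulVec g ((⟨t, ht⟩ : Fin N), a) = y t a) := by

  rcases Nat.eq_zero_or_pos N with hN0 | hN
  · subst hN0
    constructor
    · intro _
      exact ⟨0, fun t ht a => absurd ht (by omega), fun t ht a => absurd ht (by omega)⟩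
    · intro _
      exact ⟨fun _ => 0, fun t ht => absurd ht (by omega), fun t ht => absurd ht (by omega)⟩
  obtain ⟨xd, hx, hy⟩ := hd
  -- the key combination facts, for an arbitrary g
  have hcombx : ∀ (g : Fin (T - N + 1) → ℝ) (t : ℕ), t + 1 < N →
      (fun j => ∑ k : Fin (T - N + 1), g k * xd (t + 1 + (k : ℕ)) j)
        = A *ᵥ (fun l => ∑ k : Fin (T - N + 1), g k * xd (t + (k : ℕ)) l)
          + B *ᵥ (fun a => ∑ k : Fin (T - N + 1), g k * ud (t + (k : ℕ)) a) := by
    intro g t ht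
    have h1 : (fun j => ∑ k : Fin (T - N + 1), g k * xd (t + 1 + (k : ℕ)) j)
        = fun j => ∑ k : Fin (T - N + 1), g k * xd (t + (k : ℕ) + 1) j := by
      funext j
      exact Finset.sum_congr rfl fun k _ => by rw [show t + 1 + (k : ℕ) = t + (k : ℕ) + 1 from by omega]
    rw [h1]
    exact comb_step A B (fun s => xd (s + 1)) xd ud g (fun k => t + (k : ℕ))
      (fun k => hx (t + (k : ℕ)) (by have := k.2; omega))
  have hcomby : ∀ (g : Fin (T - N + 1) → ℝ) (t : ℕ), t < N →
      (fun b => ∑ k : Fin (T - N + 1), g k * yd (t + (k : ℕ)) b)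
        = C *ᵥ (fun l => ∑ k : Fin (T - N + 1), g k * xd (t + (k : ℕ)) l)
          + D *ᵥ (fun a => ∑ k : Fin (T - N + 1), g k * ud (t + (k : ℕ)) a) := by
    intro g t ht
    exact comb_step C D yd xd ud g (fun k => t + (k : ℕ))
      (fun k => hy (t + (k : ℕ)) (by have := k.2; omega))
  have hrank : (bigMat n m T N ud xd).rank = Fintype.card ((Fin N × Fin m) ⊕ Fin n) :=
    rank_of_leftKernel_triv _ (key_kernel n m T N hN A B hctrb ud xd hx hNnT hpe)
  constructor
  · rintro ⟨x, hxu, hyu⟩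
    obtain ⟨g, hg⟩ := surjective_of_rank_rows _ hrank
      (Sum.elim (fun ia : Fin N × Fin m => u ia.1 ia.2) (fun j => x 0 j))
    have hgu : ∀ (t : ℕ), t < N → ∀ (a : Fin m),
        ∑ k : Fin (T - N + 1), g k * ud (t + (k : ℕ)) a = u t a := by
      intro t ht a
      have := congrFun hg (Sum.inl (⟨t, ht⟩, a))
      simp only [Matrix.mulVec, dotProduct, bigMat, Sum.elim_inl] at this
      rw [← this]
      exact Finset.sum_congr rfl fun k _ => mul_comm _ _
    have hgx : ∀ j, ∑ k : Fin (T - N + 1), g k * xd (0 + (k : ℕ)) j = x 0 j := by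
      intro j
      have := congrFun hg (Sum.inr j)
      simp only [Matrix.mulVec, dotProduct, bigMat, Sum.elim_inr] at this
      rw [← this]
      exact Finset.sum_congr rfl fun k _ => by rw [zero_add]; ring
    have hgufun : ∀ (t : ℕ), t < N →
        (fun a => ∑ k : Fin (T - N + 1), g k * ud (t + (k : ℕ)) a) = u t := by
      intro t ht
      funext a
      exact hgu t ht a
    have hstate : ∀ t, t < N →
        x t = fun j => ∑ k : Fin (T - N + 1), g k * xd (t + (k : ℕ)) j := by
      intro t
      induction t with
      | zero =>
        intro _
        funext j
        exact (hgx j).symm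
      | succ t ih =>
        intro hts
        rw [hxu t hts, ih (by omega), hcombx g t hts, hgufun t (by omega)]
    refine ⟨g, ?_, ?_⟩
    · intro t ht a
      have := hgu t ht a
      simp only [Matrix.mulVec, dotProduct, hankelMatrix]
      rw [← this]
      exact Finset.sum_congr rfl fun k _ => mul_comm _ _
    · intro t ht a
      simp only [Matrix.mulVec, dotProduct, hankelMatrix]
      have h1 : ∑ k : Fin (T - N + 1), yd (t + (k : ℕ)) a * g k
          = ∑ k : Fin (T - N + 1), g k * yd (t + (k : ℕ)) a :=
        Finset.sum_congr rfl fun k _ => mul_comm _ _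
      rw [h1, congrFun (hcomby g t ht) a, hyu t ht, ← hstate t ht, hgufun t ht]
  · rintro ⟨g, hgu, hgy⟩
    have hgufun : ∀ (t : ℕ), t < N →
        (fun a => ∑ k : Fin (T - N + 1), g k * ud (t + (k : ℕ)) a) = u t := by
      intro t ht
      funext a
      have := hgu t ht a
      simp only [Matrix.mulVec, dotProduct, hankelMatrix] at this
      rw [← this]
      exact Finset.sum_congr rfl fun k _ => mul_comm _ _
    refine ⟨fun t j => ∑ k : Fin (T - N + 1), g k * xd (t + (k : ℕ)) j, ?_, ?_⟩
    · intro t hts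
      rw [← hgufun t (by omega)]
      exact hcombx g t hts
    · intro t ht
      funext a
      have h2 := hgy t ht a
      simp only [Matrix.mulVec, dotProduct, hankelMatrix] at h2
      rw [← h2]
      have h1 : ∑ k : Fin (T - N + 1), yd (t + (k : ℕ)) a * g k
          = ∑ k : Fin (T - N + 1), g k * yd (t + (k : ℕ)) a :=
        Finset.sum_congr rfl fun k _ => mul_comm _ _
      rw [h1, congrFun (hcomby g t ht) a, ← hgufun t ht]
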